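/- Let G be a connected P₄-free graph and let {v,w} be an edge of G that is a dominating set of G. Set A = N(v) \ N[w], B = N(w) \ N[v], and C = N(v) ∩ N(w). Then every vertex x ∈ C satisfies A ⊆ N(x) or B ⊆ N(x). -/

import Mathlib

open SimpleGraph

/-- The join of two graphs on disjoint vertex sets: disjoint union plus all cross edges. -/
def gJoin {α β : Type*} (G : SimpleGraph α) (H : SimpleGraph β) : SimpleGraph (α ⊕ β) where
  Adj x y := match x, y with
    | Sum.inl a, Sum.inl b => G.Adj a b
    | Sum.inr a, Sum.inr b => H.Adj a b
    | Sum.inl _, Sum.inr _ => True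
    | Sum.inr _, Sum.inl _ => True
  symm := ⟨by rintro (a|a) (b|b) h <;> first | exact h.symm | trivial⟩
  loopless := ⟨by rintro (a|a) h; exacts [G.loopless.irrefl _ h, H.loopless.irrefl _ h]⟩

/-- A graph is `P₄`-free if it has no induced subgraph isomorphic to the path on 4 vertices. -/
def P4Free {V : Type*} (G : SimpleGraph V) : Prop :=
  IsEmpty (SimpleGraph.pathGraph 4 ↪g G)

/-- `T` is a connected dominating set of `G`. -/
def IsConnDomSet {V : Type*} (G : SimpleGraph V) (T : Set V) : Prop :=
  T.Nonempty ∧ (G.induce T).Connected ∧ ∀ u ∉ T, ∃ t ∈ T, G.Adj u t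

/-- `T` is a minimum connected dominating set of `G`. -/
def IsMinConnDomSet {V : Type*} (G : SimpleGraph V) (T : Set V) : Prop :=
  IsConnDomSet G T ∧ ∀ T' : Set V, IsConnDomSet G T' → T.ncard ≤ T'.ncard

/-- The graph `K₁ ⊔ K₂`: three vertices, exactly one edge (between 0 and 1). -/
def graphK1K2 : SimpleGraph (Fin 3) := SimpleGraph.fromRel (fun a b => a = 0 ∧ b = 1)

/-- The star `K_{1,3}`: vertex 0 adjacent to 1, 2, 3. -/
def graphK13 : SimpleGraph (Fin 4) := SimpleGraph.fromRel (fun a _ => a = 0)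

/-- The graph `B = K₁ * (K₁ ⊔ K₂)`: vertex 0 adjacent to all, plus the edge 2-3. -/
def graphB : SimpleGraph (Fin 4) := SimpleGraph.fromRel (fun a b => a = 0 ∨ (a = 2 ∧ b = 3))

lemma mkP4 {V : Type} (G : SimpleGraph V) (a b c d : V)
    (hab : G.Adj a b) (hbc : G.Adj b c) (hcd : G.Adj c d)
    (hac : ¬G.Adj a c) (had : ¬G.Adj a d) (hbd : ¬G.Adj b d)
    (h1 : a ≠ c) (h2 : a ≠ d) (h3 : b ≠ d) :
    Nonempty (SimpleGraph.pathGraph 4 ↪g G) := by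
  have hca : ¬G.Adj c a := fun h => hac h.symm
  have hda : ¬G.Adj d a := fun h => had h.symm
  have hdb : ¬G.Adj d b := fun h => hbd h.symm
  have h1' : c ≠ a := h1.symm
  have h2' : d ≠ a := h2.symm
  have h3' : d ≠ b := h3.symm
  refine ⟨⟨⟨![a,b,c,d], ?_⟩, ?_⟩⟩
  · intro i j hij
    fin_cases i <;> fin_cases j <;> simp_all <;>
      first
      | rfl
      | (exact absurd hij (G.ne_of_adj ‹_›))
      | (exact absurd hij.symm (G.ne_of_adj ‹_›))
      | (exact absurd hij h1) | (exact absurd hij h2) | (exact absurd hij h3)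
      | (exact absurd hij h1') | (exact absurd hij h2') | (exact absurd hij h3')
  · intro i j
    fin_cases i <;> fin_cases j <;>
      simp only [SimpleGraph.pathGraph_adj, Matrix.cons_val_zero, Matrix.cons_val_one,
        Matrix.head_cons, Matrix.cons_val_two, Matrix.tail_cons, Matrix.cons_val_three] <;>
      first
      | decide
      | (simp [hab, hbc, hcd, hab.symm, hbc.symm, hcd.symm, hac, had, hbd,
          hca, hda, hdb, G.loopless.irrefl] <;>
          first | assumption | exact hab.symm | exact hbc.symm | exact hcd.symm)

/-- In a connected P₄-free graph with dominating edge {v,w}, every common neighbor x of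
v and w satisfies A ⊆ N(x) or B ⊆ N(x). -/
theorem stmt3 {V : Type} [Fintype V] (G : SimpleGraph V) (hc : G.Connected)
    (h4 : P4Free G) (v w : V) (hvw : G.Adj v w)
    (hdom : ∀ u, u ≠ v → u ≠ w → G.Adj u v ∨ G.Adj u w) :
    ∀ x ∈ G.neighborSet v ∩ G.neighborSet w,
      G.neighborSet v \ (G.neighborSet w ∪ {w}) ⊆ G.neighborSet x ∨
      G.neighborSet w \ (G.neighborSet v ∪ {v}) ⊆ G.neighborSet x := by
  intro x hx
  by_contra hcon
  push_neg at hcon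
  obtain ⟨hA, hB⟩ := hcon
  rw [Set.not_subset] at hA hB
  obtain ⟨a, ha, hxa⟩ := hA
  obtain ⟨b, hb, hxb⟩ := hB
  simp only [Set.mem_diff, Set.mem_union, Set.mem_singleton_iff, mem_neighborSet,
    Set.mem_inter_iff, not_or] at ha hb hx hxa hxb
  have hav : G.Adj a v := ha.1.symm
  have haw : ¬G.Adj a w := fun h => ha.2.1 h.symm
  have haw' : a ≠ w := ha.2.2
  have hbw : G.Adj b w := hb.1.symm
  have hbv : ¬G.Adj b v := fun h => hb.2.1 h.symm
  have hbv' : b ≠ v := hb.2.2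
  have hxv : G.Adj x v := hx.1.symm
  have hxw : G.Adj x w := hx.2.symm
  by_cases hab : G.Adj a b
  · -- induced path x - v - a - b
    exact h4.false (Classical.choice (mkP4 G x v a b hxv hav.symm hab
      hxa hxb (fun h => hbv h.symm)
      (fun h => haw (h ▸ hxw)) (fun h => hbv (h ▸ hxv)) (fun h => hbv' h.symm)))
  · -- induced path a - v - w - b
    exact h4.false (Classical.choice (mkP4 G a v w b hav hvw hbw.symm
      haw hab (fun h => hbv h.symm)
      haw' (fun h => hbv (h ▸ hav)) (fun h => hbv' h.symm)))
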